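/- With E and Fᵢ as above, a point Y ∈ ℝ^m_{≥0} satisfies Yᵢ·Fᵢ(Y) = 0 for all i if and only if, after a permutation of indices, there exists k ∈ {0,1,...,m} such that Y₁,...,Y_k > 0 with F₁(Y)=...=F_k(Y)=0 and Y_{k+1}=...=Y_m=0; moreover for each fixed set θ of indices with positive coordinates there is exactly one such zero. -/

import Mathlib

open BigOperators

/-- E(Y) = Σᵢ nᵢ qᵢ² Yᵢ². -/
def flowE (m : ℕ) (n : Fin m → ℕ) (q : Fin m → ℝ) (Y : Fin m → ℝ) : ℝ :=
  ∑ j, (n j : ℝ) * q j ^ 2 * Y j ^ 2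

/-- Fᵢ(Y) = 2pᵢYᵢ − qᵢ²Yᵢ² − E(Y). -/
def flowF (m : ℕ) (n : Fin m → ℕ) (p q : Fin m → ℝ) (i : Fin m) (Y : Fin m → ℝ) : ℝ :=
  2 * p i * Y i - q i ^ 2 * Y i ^ 2 - flowE m n q Y

lemma flow_part1 (m : ℕ) (n : Fin m → ℕ) (p q : Fin m → ℝ)
    (Y : Fin m → ℝ) (hY : ∀ i, 0 ≤ Y i) :
      ((∀ i, Y i * flowF m n p q i Y = 0) ↔
        ∃ (σ : Equiv.Perm (Fin m)) (k : ℕ), k ≤ m ∧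
          (∀ i : Fin m, (i : ℕ) < k → 0 < Y (σ i) ∧ flowF m n p q (σ i) Y = 0) ∧
          (∀ i : Fin m, k ≤ (i : ℕ) → Y (σ i) = 0)) := by
  classical
  constructor
  · intro hYF
    set S : Finset (Fin m) := Finset.univ.filter (fun i => 0 < Y i) with hS
    set l : List (Fin m) := S.toList ++ Sᶜ.toList with hl
    have hlen : l.length = m := by
      simp [hl, Finset.length_toList, Finset.card_add_card_compl]
    have hnd : l.Nodup := by
      refine List.Nodup.append S.nodup_toList Sᶜ.nodup_toList ?_
      intro a ha hb
      rw [Finset.mem_toList] at ha hb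
      exact (Finset.mem_compl.mp hb) ha
    have hmem : ∀ x, x ∈ l := by
      intro x
      rw [hl, List.mem_append, Finset.mem_toList, Finset.mem_toList, Finset.mem_compl]
      exact em _
    set e := List.Nodup.getEquivOfForallMemList l hnd hmem with he
    refine ⟨(finCongr hlen.symm).trans e, S.card, ?_, ?_, ?_⟩
    · calc S.card ≤ Finset.univ.card := Finset.card_le_univ S
        _ = m := by simp
    · intro i hi
      have hi' : (i : ℕ) < S.toList.length := by rwa [Finset.length_toList]
      have : ((finCongr hlen.symm).trans e) i = S.toList[(i:ℕ)] := by
        simp [he, List.Nodup.getEquivOfForallMemList, hl]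
        rw [List.getElem_append_left hi']
      rw [this]
      have hmemS : S.toList[(i:ℕ)] ∈ S := Finset.mem_toList.mp (List.getElem_mem _)
      have hpos : 0 < Y (S.toList[(i:ℕ)]) := (Finset.mem_filter.mp hmemS).2
      refine ⟨hpos, ?_⟩
      have := hYF (S.toList[(i:ℕ)])
      rcases mul_eq_zero.mp this with h | h
      · exact absurd h hpos.ne'
      · exact h
    · intro i hi
      have hi2 : (i : ℕ) < l.length := by rw [hlen]; exact i.isLt
      have hi' : S.toList.length ≤ (i : ℕ) := by rwa [Finset.length_toList]
      have hcc : Sᶜ.card = m - S.card := by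
        rw [Finset.card_compl]; simp
      have hlt : (i : ℕ) - S.card < Sᶜ.toList.length := by
        have := i.isLt
        rw [Finset.length_toList, hcc]
        have hk : S.card ≤ m := le_trans (Finset.card_le_univ S) (by simp)
        omega
      have : ((finCongr hlen.symm).trans e) i = Sᶜ.toList[(i:ℕ) - S.card] := by
        simp [he, List.Nodup.getEquivOfForallMemList, hl]
        rw [List.getElem_append_right hi']
        simp [Finset.length_toList]
      rw [this]
      have hmemS : Sᶜ.toList[(i:ℕ) - S.card] ∈ Sᶜ := Finset.mem_toList.mp (List.getElem_mem _)
      have : ¬ (0 < Y (Sᶜ.toList[(i:ℕ) - S.card])) := by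
        have := Finset.mem_compl.mp hmemS
        simpa [hS] using this
      exact le_antisymm (not_lt.mp this) (hY _)
  · rintro ⟨σ, k, hkm, hpos, hzero⟩ i
    obtain ⟨j, rfl⟩ : ∃ j, σ j = i := ⟨σ.symm i, σ.apply_symm_apply i⟩
    by_cases hj : (j : ℕ) < k
    · rw [(hpos j hj).2, mul_zero]
    · rw [hzero j (not_lt.mp hj), zero_mul]

section Aux
variable {m : ℕ} (n : Fin m → ℕ) (p q : Fin m → ℝ) (θ : Finset (Fin m))

/-- The auxiliary function ψ. -/
noncomputable def flowPsi (e : ℝ) : ℝ :=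
  ∑ i ∈ θ, (n i : ℝ) * q i ^ 2 * e / (p i + Real.sqrt (p i ^ 2 - q i ^ 2 * e)) ^ 2

variable (hn : ∀ i, 0 < n i) (hp : ∀ i, 0 < p i) (hq : ∀ i, q i ≠ 0)
include hn hp hq

lemma psi_strictMonoOn (hθ : θ.Nonempty) : StrictMonoOn (flowPsi n p q θ) (Set.Ici 0) := by
  intro a ha b hb hab
  refine Finset.sum_lt_sum_of_nonempty hθ ?_
  intro i _
  have hqi := hq i
  have hpi := hp i
  have hq2 : (0:ℝ) < q i ^ 2 := by positivity
  have hsb : 0 ≤ Real.sqrt (p i ^ 2 - q i ^ 2 * b) := Real.sqrt_nonneg _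
  have hsa : 0 ≤ Real.sqrt (p i ^ 2 - q i ^ 2 * a) := Real.sqrt_nonneg _
  have hsab : Real.sqrt (p i ^ 2 - q i ^ 2 * b) ≤ Real.sqrt (p i ^ 2 - q i ^ 2 * a) := by
    apply Real.sqrt_le_sqrt
    nlinarith [mul_le_mul_of_nonneg_left hab.le (le_of_lt hq2)]
  have hdb : (0:ℝ) < (p i + Real.sqrt (p i ^ 2 - q i ^ 2 * b)) ^ 2 :=
    pow_pos (by linarith) 2
  have hda : (0:ℝ) < (p i + Real.sqrt (p i ^ 2 - q i ^ 2 * a)) ^ 2 :=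
    pow_pos (by linarith) 2
  have hden : (p i + Real.sqrt (p i ^ 2 - q i ^ 2 * b)) ^ 2 ≤
      (p i + Real.sqrt (p i ^ 2 - q i ^ 2 * a)) ^ 2 := by nlinarith [hp i]
  have hnum : (n i : ℝ) * q i ^ 2 * a < (n i : ℝ) * q i ^ 2 * b := by
    have : (0:ℝ) < (n i : ℝ) * q i ^ 2 := by
      have := hn i; positivity
    nlinarith
  have hnn : 0 ≤ (n i : ℝ) * q i ^ 2 * a := by
    have : (0:ℝ) ≤ a := ha
    positivity
  calc (n i : ℝ) * q i ^ 2 * a / (p i + Real.sqrt (p i ^ 2 - q i ^ 2 * a)) ^ 2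
      ≤ (n i : ℝ) * q i ^ 2 * a / (p i + Real.sqrt (p i ^ 2 - q i ^ 2 * b)) ^ 2 := by
        apply div_le_div_of_nonneg_left hnn hdb hden
    _ < (n i : ℝ) * q i ^ 2 * b / (p i + Real.sqrt (p i ^ 2 - q i ^ 2 * b)) ^ 2 :=
        (div_lt_div_iff_of_pos_right hdb).mpr hnum

lemma psi_continuous : Continuous (flowPsi n p q θ) := by
  apply continuous_finset_sum
  intro i _
  apply Continuous.div
  · continuity
  · continuity
  · intro x
    have h1 : 0 < p i + Real.sqrt (p i ^ 2 - q i ^ 2 * x) := by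
      have := Real.sqrt_nonneg (p i ^ 2 - q i ^ 2 * x)
      have := hp i
      linarith
    positivity

/-- key: any solution W has flowE W determined by ψ(e)=1 and the formula. -/
lemma sol_key (hθ : θ.Nonempty) (W : Fin m → ℝ)
    (h1 : ∀ i ∈ θ, 0 < W i ∧ flowF m n p q i W = 0) (h2 : ∀ i ∉ θ, W i = 0) :
    0 < flowE m n q W ∧
    (∀ i ∈ θ, flowE m n q W ≤ p i ^ 2 / q i ^ 2) ∧
    flowPsi n p q θ (flowE m n q W) = 1 ∧
    (∀ i ∈ θ, W i = (p i - Real.sqrt (p i ^ 2 - q i ^ 2 * flowE m n q W)) / q i ^ 2) := by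
  set e := flowE m n q W with hedef
  have hesum : e = ∑ i ∈ θ, (n i : ℝ) * q i ^ 2 * W i ^ 2 := by
    rw [hedef, flowE]
    rw [← Finset.sum_subset (Finset.subset_univ θ)]
    intro x _ hx
    rw [h2 x hx]; ring
  have hepos : 0 < e := by
    rw [hesum]
    apply Finset.sum_pos
    · intro i hi
      have := (h1 i hi).1
      have := hn i
      have := hq i
      positivity
    · exact hθ
  -- basic facts per index
  have hWle : ∀ i ∈ θ, q i ^ 2 * W i ≤ p i := by
    intro i hi
    obtain ⟨hWi, hFi⟩ := h1 i hi
    have hterm : (n i : ℝ) * q i ^ 2 * W i ^ 2 ≤ e := by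
      rw [hesum]
      apply Finset.single_le_sum (f := fun j => (n j : ℝ) * q j ^ 2 * W j ^ 2) ?_ hi
      intro j hj
      have := (h1 j hj).1
      positivity
    have hn1 : (1:ℝ) ≤ (n i : ℝ) := by exact_mod_cast hn i
    have hF : 2 * p i * W i - q i ^ 2 * W i ^ 2 - e = 0 := hFi
    nlinarith [mul_nonneg (sub_nonneg.mpr hn1)
      (mul_nonneg (sq_nonneg (q i)) (sq_nonneg (W i))), mul_pos hWi hWi]
  have hdisc : ∀ i ∈ θ, p i ^ 2 - q i ^ 2 * e = (q i ^ 2 * W i - p i) ^ 2 := by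
    intro i hi
    have hF : 2 * p i * W i - q i ^ 2 * W i ^ 2 - e = 0 := (h1 i hi).2
    nlinarith [hF]
  have hform : ∀ i ∈ θ, W i = (p i - Real.sqrt (p i ^ 2 - q i ^ 2 * e)) / q i ^ 2 := by
    intro i hi
    have hW := hWle i hi
    have hs : Real.sqrt (p i ^ 2 - q i ^ 2 * e) = p i - q i ^ 2 * W i := by
      rw [hdisc i hi]
      rw [show (q i ^ 2 * W i - p i) ^ 2 = (p i - q i ^ 2 * W i) ^ 2 by ring]
      exact Real.sqrt_sq (by linarith)
    rw [hs]
    have hq2 : (q i:ℝ) ^ 2 ≠ 0 := pow_ne_zero _ (hq i)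
    field_simp
    rw [eq_div_iff hq2]; ring
  have hle : ∀ i ∈ θ, e ≤ p i ^ 2 / q i ^ 2 := by
    intro i hi
    have := hdisc i hi
    have hqi := hq i
    have hq2 : (0:ℝ) < q i ^ 2 := by positivity
    rw [le_div_iff₀ hq2]
    nlinarith [sq_nonneg (q i ^ 2 * W i - p i)]
  refine ⟨hepos, hle, ?_, hform⟩
  -- ψ e = 1
  have hmul : e * flowPsi n p q θ e = e := by
    rw [flowPsi, Finset.mul_sum]
    have hterm : ∀ i ∈ θ,
        e * ((n i : ℝ) * q i ^ 2 * e / (p i + Real.sqrt (p i ^ 2 - q i ^ 2 * e)) ^ 2)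
          = (n i : ℝ) * q i ^ 2 * W i ^ 2 := by
      intro i hi
      set s := Real.sqrt (p i ^ 2 - q i ^ 2 * e) with hsdef
      have hs2 : s ^ 2 = p i ^ 2 - q i ^ 2 * e := by
        rw [hsdef]
        apply Real.sq_sqrt
        rw [hdisc i hi]; positivity
      have hfac : (p i - s) * (p i + s) = q i ^ 2 * e := by linear_combination (-1:ℝ) * hs2
      have hspos : 0 < p i + s := by
        have : 0 ≤ s := Real.sqrt_nonneg _
        have := hp i; linarith
      have hq2 : (q i:ℝ) ^ 2 ≠ 0 := pow_ne_zero _ (hq i)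
      have hps : (p i + s) ≠ 0 := ne_of_gt hspos
      have hqi : q i ≠ 0 := hq i
      rw [hform i hi, ← hsdef]
      field_simp
      linear_combination (-(n i:ℝ) * (q i ^ 2 * e + (p i - s) * (p i + s))) * hfac
    rw [Finset.sum_congr rfl hterm, ← hesum]
  have := mul_left_cancel₀ (ne_of_gt hepos) (by rw [hmul, mul_one] : e * flowPsi n p q θ e = e * 1)
  exact this


lemma sol_unique (W₁ W₂ : Fin m → ℝ)
    (hW₁ : (∀ i ∈ θ, 0 < W₁ i ∧ flowF m n p q i W₁ = 0) ∧ (∀ i ∉ θ, W₁ i = 0))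
    (hW₂ : (∀ i ∈ θ, 0 < W₂ i ∧ flowF m n p q i W₂ = 0) ∧ (∀ i ∉ θ, W₂ i = 0)) :
    W₁ = W₂ := by
  rcases Finset.eq_empty_or_nonempty θ with rfl | hθ
  · funext i
    rw [hW₁.2 i (by simp), hW₂.2 i (by simp)]
  · obtain ⟨he₁, -, hψ₁, hf₁⟩ := sol_key n p q θ hn hp hq hθ W₁ hW₁.1 hW₁.2
    obtain ⟨he₂, -, hψ₂, hf₂⟩ := sol_key n p q θ hn hp hq hθ W₂ hW₂.1 hW₂.2
    have hee : flowE m n q W₁ = flowE m n q W₂ :=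
      (psi_strictMonoOn n p q θ hn hp hq hθ).injOn he₁.le he₂.le (hψ₁.trans hψ₂.symm)
    funext i
    by_cases hi : i ∈ θ
    · rw [hf₁ i hi, hf₂ i hi, hee]
    · rw [hW₁.2 i hi, hW₂.2 i hi]

lemma sol_exists (hθ : θ.Nonempty) :
    ∃ Z : Fin m → ℝ,
      (∀ i ∈ θ, 0 < Z i ∧ flowF m n p q i Z = 0) ∧ (∀ i ∉ θ, Z i = 0) := by
  classical
  set estar := θ.inf' hθ (fun i => p i ^ 2 / q i ^ 2) with hestar
  have hstar_pos : 0 < estar := by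
    rw [hestar, Finset.lt_inf'_iff]
    intro i _
    have := hp i; have := hq i
    positivity
  have hψ0 : flowPsi n p q θ 0 = 0 := by
    simp [flowPsi]
  have hψstar : 1 ≤ flowPsi n p q θ estar := by
    obtain ⟨j, hj, hjeq⟩ := Finset.exists_mem_eq_inf' hθ (fun i => p i ^ 2 / q i ^ 2)
    have hqj : (q j:ℝ) ^ 2 ≠ 0 := pow_ne_zero _ (hq j)
    have hqj' : q j ≠ 0 := hq j
    have hpj := hp j
    have hq2e : q j ^ 2 * estar = p j ^ 2 := by
      rw [hestar, hjeq]; field_simp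
    have hterm : (n j : ℝ) * q j ^ 2 * estar /
        (p j + Real.sqrt (p j ^ 2 - q j ^ 2 * estar)) ^ 2 = (n j : ℝ) := by
      rw [show p j ^ 2 - q j ^ 2 * estar = 0 by linarith, Real.sqrt_zero, add_zero]
      rw [show (n j : ℝ) * q j ^ 2 * estar = (n j : ℝ) * (q j ^ 2 * estar) by ring, hq2e]
      field_simp
    have hn1 : (1:ℝ) ≤ (n j : ℝ) := by exact_mod_cast hn j
    calc (1:ℝ) ≤ (n j : ℝ) := hn1
      _ = _ := hterm.symm
      _ ≤ flowPsi n p q θ estar := by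
        apply Finset.single_le_sum (f := fun i => (n i : ℝ) * q i ^ 2 * estar /
          (p i + Real.sqrt (p i ^ 2 - q i ^ 2 * estar)) ^ 2) ?_ hj
        intro i _
        have hpi := hp i
        have hsi := Real.sqrt_nonneg (p i ^ 2 - q i ^ 2 * estar)
        have : (0:ℝ) < (p i + Real.sqrt (p i ^ 2 - q i ^ 2 * estar)) ^ 2 :=
          pow_pos (by linarith) 2
        have : (0:ℝ) ≤ (n i : ℝ) * q i ^ 2 * estar := by positivity
        positivity
  obtain ⟨e, he, hψe⟩ := intermediate_value_Icc hstar_pos.le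
    (psi_continuous n p q θ hn hp hq).continuousOn
    (show (1:ℝ) ∈ Set.Icc (flowPsi n p q θ 0) (flowPsi n p q θ estar) from
      ⟨by rw [hψ0]; norm_num, hψstar⟩)
  have hepos : 0 < e := by
    rcases lt_or_eq_of_le he.1 with h | h
    · exact h
    · exfalso; rw [← h, hψ0] at hψe; norm_num at hψe
  set Z : Fin m → ℝ := fun i => if i ∈ θ then
    (p i - Real.sqrt (p i ^ 2 - q i ^ 2 * e)) / q i ^ 2 else 0 with hZ
  have hdiscnn : ∀ i ∈ θ, 0 ≤ p i ^ 2 - q i ^ 2 * e := by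
    intro i hi
    have h1 : e ≤ p i ^ 2 / q i ^ 2 := le_trans he.2 (Finset.inf'_le _ hi)
    have hq2 : (0:ℝ) < q i ^ 2 := by have := hq i; positivity
    have h2 : e * q i ^ 2 ≤ p i ^ 2 := (le_div_iff₀ hq2).mp h1
    linarith
  have hZpos : ∀ i ∈ θ, 0 < Z i := by
    intro i hi
    rw [hZ]
    simp only [hi, if_true]
    have hq2 : (0:ℝ) < q i ^ 2 := by have := hq i; positivity
    have hslt : Real.sqrt (p i ^ 2 - q i ^ 2 * e) < p i := by
      rw [Real.sqrt_lt' (hp i)]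
      nlinarith
    exact div_pos (by linarith) hq2
  have hEZ : flowE m n q Z = e := by
    rw [flowE]
    rw [← Finset.sum_subset (Finset.subset_univ θ) (by
      intro x _ hx
      rw [hZ]; simp [hx])]
    have hterm : ∀ i ∈ θ, (n i : ℝ) * q i ^ 2 * Z i ^ 2
        = e * ((n i : ℝ) * q i ^ 2 * e / (p i + Real.sqrt (p i ^ 2 - q i ^ 2 * e)) ^ 2) := by
      intro i hi
      have hs2 := Real.sq_sqrt (hdiscnn i hi)
      set s := Real.sqrt (p i ^ 2 - q i ^ 2 * e) with hsdef
      have hfac : (p i - s) * (p i + s) = q i ^ 2 * e := by linear_combination (-1:ℝ) * hs2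
      have hspos : 0 < p i + s := by
        have : 0 ≤ s := Real.sqrt_nonneg _
        have := hp i; linarith
      have hq2 : (q i:ℝ) ^ 2 ≠ 0 := pow_ne_zero _ (hq i)
      have hps : (p i + s) ≠ 0 := ne_of_gt hspos
      have hqi : q i ≠ 0 := hq i
      rw [hZ]
      simp only [hi, if_true]
      rw [← hsdef]
      field_simp
      linear_combination ((n i:ℝ) * (q i ^ 2 * e + (p i - s) * (p i + s))) * hfac
    rw [Finset.sum_congr rfl hterm, ← Finset.mul_sum, ← flowPsi, hψe, mul_one]
  refine ⟨Z, ?_, ?_⟩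
  · intro i hi
    refine ⟨hZpos i hi, ?_⟩
    rw [flowF, hEZ]
    have hs2 := Real.sq_sqrt (hdiscnn i hi)
    set s := Real.sqrt (p i ^ 2 - q i ^ 2 * e) with hsdef
    have hq2 : (q i:ℝ) ^ 2 ≠ 0 := pow_ne_zero _ (hq i)
    have hZi : Z i = (p i - s) / q i ^ 2 := by rw [hZ]; simp [hi, hsdef]
    have hqi : q i ≠ 0 := hq i
    rw [hZi]
    field_simp
    linear_combination (-1:ℝ) * hs2
  · intro i hi
    rw [hZ]; simp [hi]

end Aux

/-- characterization and uniqueness of zeros of G(Y)=(YᵢFᵢ(Y)). -/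
theorem stmt5 (m : ℕ) (n : Fin m → ℕ) (p q : Fin m → ℝ)
    (hn : ∀ i, 0 < n i) (hp : ∀ i, 0 < p i) (hq : ∀ i, q i ≠ 0) :
    (∀ Y : Fin m → ℝ, (∀ i, 0 ≤ Y i) →
      ((∀ i, Y i * flowF m n p q i Y = 0) ↔
        ∃ (σ : Equiv.Perm (Fin m)) (k : ℕ), k ≤ m ∧
          (∀ i : Fin m, (i : ℕ) < k → 0 < Y (σ i) ∧ flowF m n p q (σ i) Y = 0) ∧
          (∀ i : Fin m, k ≤ (i : ℕ) → Y (σ i) = 0))) ∧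
    (∀ θ : Finset (Fin m), ∃! Z : Fin m → ℝ,
      (∀ i ∈ θ, 0 < Z i ∧ flowF m n p q i Z = 0) ∧ (∀ i ∉ θ, Z i = 0)) := by
  constructor
  · exact fun Y hY => flow_part1 m n p q Y hY
  · intro θ
    rcases Finset.eq_empty_or_nonempty θ with rfl | hθ
    · refine ⟨fun _ => 0, ⟨by simp, fun i _ => rfl⟩, ?_⟩
      intro W hW
      funext i
      exact hW.2 i (by simp)
    · obtain ⟨Z, hZ1, hZ2⟩ := sol_exists n p q θ hn hp hq hθ
      exact ⟨Z, ⟨hZ1, hZ2⟩, fun W hW => sol_unique n p q θ hn hp hq W Z hW ⟨hZ1, hZ2⟩⟩
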